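/- Let n, m ≥ 2, let c1, c2 > 0, and let T be a deterministic decision tree over Σ^M such that T(x^ℓ) = 0 for every ℓ : [m] → [n], and such that on every input x^ℓ, at the moment T reaches its output leaf, either at least c1·m of the queried cells have value 0 or at least c2·n·m cells have been queried. Then the expected cost of T over the hard distribution satisfies E_ℓ[C(T, x^ℓ)] ≥ (1/2)·min(⌊c1·n·m/8⌋, c2·n·m), where ℓ is uniform over all functions [m] → [n]. -/

import Mathlib

open Classical
open scoped ENNReal

set_option maxHeartbeats 1000000

/-! ### Deterministic decision trees -/

inductive DTree (ι σ : Type) : Type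
  | leaf (b : Bool) : DTree ι σ
  | node (v : ι) (child : σ → DTree ι σ) : DTree ι σ

namespace DTree

variable {ι σ : Type}

/-- The output of the decision tree on input `x`. -/
def eval (x : ι → σ) : DTree ι σ → Bool
  | leaf b => b
  | node v child => (child (x v)).eval x

/-- The list of variables queried by the decision tree on input `x`,
in the order they are queried. -/
def queryList (x : ι → σ) : DTree ι σ → List ι
  | leaf _ => []
  | node v child => v :: (child (x v)).queryList x

/-- The cost of the decision tree on input `x`: the number of internal nodes visited. -/
def cost (T : DTree ι σ) (x : ι → σ) : ℕ := (T.queryList x).length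

/-- `T` computes `f` if it outputs `f x` on every input `x`. -/
def Computes (T : DTree ι σ) (f : (ι → σ) → Bool) : Prop := ∀ x, T.eval x = f x

end DTree

/-- Deterministic query complexity. -/
noncomputable def detComplexity {ι σ : Type} (f : (ι → σ) → Bool) : ℕ :=
  sInf {d : ℕ | ∃ T : DTree ι σ, T.Computes f ∧ ∀ x, T.cost x ≤ d}

/-- Expected cost of a randomized decision tree (a distribution over deterministic
decision trees) on input `x`. -/
noncomputable def expCost {ι σ : Type} (μ : PMF (DTree ι σ)) (x : ι → σ) : ℝ≥0∞ :=
  ∑' T : DTree ι σ, μ T * (T.cost x : ℝ≥0∞)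

/-- Zero-error (Las Vegas) randomized query complexity. -/
noncomputable def R0query {ι σ : Type} (f : (ι → σ) → Bool) : ℝ≥0∞ :=
  ⨅ μ ∈ {μ : PMF (DTree ι σ) | ∀ T ∈ μ.support, T.Computes f},
    ⨆ x : ι → σ, expCost μ x

/-- One-sided error randomized query complexity. -/
noncomputable def R1query {ι σ : Type} (f : (ι → σ) → Bool) : ℝ≥0∞ :=
  ⨅ μ ∈ {μ : PMF (DTree ι σ) |
      (∀ x, f x = false → ∀ T ∈ μ.support, T.eval x = false) ∧
      (∀ x, f x = true → 1 / 2 ≤ ∑' T : DTree ι σ, if T.eval x = true then μ T else 0)},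
    ⨆ x : ι → σ, expCost μ x

/-- Bounded-error (Monte Carlo) randomized query complexity. -/
noncomputable def Rquery {ι σ : Type} (f : (ι → σ) → Bool) : ℝ≥0∞ :=
  ⨅ μ ∈ {μ : PMF (DTree ι σ) |
      ∀ x, 9 / 10 ≤ ∑' T : DTree ι σ, if T.eval x = f x then μ T else 0},
    ⨆ x : ι → σ, expCost μ x
/-! ### Quantum query algorithms -/

/-- The standard quantum query oracle `O_x |j,p⟩|w⟩ = |j, p + x_j mod S⟩|w⟩`,
as a matrix. -/
noncomputable def qOracle {V ω : Type} [DecidableEq V] [DecidableEq ω] {S : ℕ}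
    (x : V → Fin S) : Matrix (V × Fin S × ω) (V × Fin S × ω) ℂ :=
  fun r c => if r = (c.1, c.2.1 + x c.1, c.2.2) then 1 else 0

/-- A quantum query algorithm on inputs `x : V → Fin S`, making `queries` queries, with
workspace `Fin (W+1)`, alternating the unitaries `U 0, …, U queries` with the oracle,
and measuring with the projector `P` at the end. -/
structure QAlg (V : Type) [Fintype V] [DecidableEq V] (S : ℕ) [NeZero S] where
  queries : ℕ
  W : ℕ
  init : V
  U : ℕ → Matrix (V × Fin S × Fin (W + 1)) (V × Fin S × Fin (W + 1)) ℂ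
  hU : ∀ t, (U t).conjTranspose * U t = 1 ∧ U t * (U t).conjTranspose = 1
  P : Matrix (V × Fin S × Fin (W + 1)) (V × Fin S × Fin (W + 1)) ℂ
  hP : P.conjTranspose = P ∧ P * P = P

namespace QAlg

variable {V : Type} [Fintype V] [DecidableEq V] {S : ℕ} [NeZero S]

/-- The state of the quantum algorithm after `t` steps on input `x`. -/
noncomputable def state (A : QAlg V S) (x : V → Fin S) :
    ℕ → (V × Fin S × Fin (A.W + 1) → ℂ)
  | 0 => (A.U 0).mulVec fun r => if r = (A.init, 0, 0) then 1 else 0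
  | t + 1 => (A.U (t + 1)).mulVec ((qOracle x).mulVec (A.state x t))

/-- The probability that the algorithm accepts input `x`: `‖P |Ψ_x⟩‖²`. -/
noncomputable def acceptProb (A : QAlg V S) (x : V → Fin S) : ℝ :=
  ∑ r : V × Fin S × Fin (A.W + 1), Complex.normSq (A.P.mulVec (A.state x A.queries) r)

end QAlg

/-- Bounded-error quantum query complexity (for functions over a finite input
alphabet `σ`, identified with `Fin (card σ)` via a fixed bijection). -/
noncomputable def Qquery {V σ : Type} [Fintype V] [DecidableEq V] [Fintype σ] [Nonempty σ]
    (f : (V → σ) → Bool) : ℕ :=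
  letI : NeZero (Fintype.card σ) := ⟨Fintype.card_ne_zero⟩
  sInf {t : ℕ | ∃ A : QAlg V (Fintype.card σ), A.queries = t ∧
    ∀ x : V → σ,
      (f x = true → 9 / 10 ≤ A.acceptProb fun j => Fintype.equivFin σ (x j)) ∧
      (f x = false → A.acceptProb (fun j => Fintype.equivFin σ (x j)) ≤ 1 / 10)}

/-- Exact quantum query complexity. -/
noncomputable def QEquery {V σ : Type} [Fintype V] [DecidableEq V] [Fintype σ] [Nonempty σ]
    (f : (V → σ) → Bool) : ℕ :=
  letI : NeZero (Fintype.card σ) := ⟨Fintype.card_ne_zero⟩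
  sInf {t : ℕ | ∃ A : QAlg V (Fintype.card σ), A.queries = t ∧
    ∀ x : V → σ,
      (f x = true → A.acceptProb (fun j => Fintype.equivFin σ (x j)) = 1) ∧
      (f x = false → A.acceptProb (fun j => Fintype.equivFin σ (x j)) = 0)}

/-- Approximate degree of a boolean function. -/
noncomputable def adeg {ι : Type} (F : (ι → Bool) → Bool) : ℕ :=
  sInf {d : ℕ | ∃ p : MvPolynomial ι ℝ, p.totalDegree ≤ d ∧
    ∀ y : ι → Bool, |MvPolynomial.eval (fun i => if y i then (1 : ℝ) else 0) p -
      (if F y then 1 else 0)| ≤ 1 / 10}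
/-! ### The pointer functions of Göös–Pitassi–Watson type -/

/-- A symbol of the input alphabet: a boolean value, a left pointer, a right pointer,
and a back/internal pointer (to a cell or a column, depending on `β`). -/
structure PSym (n m : ℕ) (β : Type) where
  val : Bool
  lp : Option (Fin n × Fin m)
  rp : Option (Fin n × Fin m)
  bp : Option β
deriving DecidableEq

/-- The all-ones symbol `(1,⊥,⊥,⊥)`. -/
def PSym.one (n m : ℕ) (β : Type) : PSym n m β := ⟨true, none, none, none⟩

/-- The symbol `(0,⊥,⊥,⊥)`. -/
def PSym.zero (n m : ℕ) (β : Type) : PSym n m β := ⟨false, none, none, none⟩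

def PSym.equivProd (n m : ℕ) (β : Type) :
    PSym n m β ≃ Bool × Option (Fin n × Fin m) × Option (Fin n × Fin m) × Option β where
  toFun v := (v.val, v.lp, v.rp, v.bp)
  invFun p := ⟨p.1, p.2.1, p.2.2.1, p.2.2.2⟩
  left_inv _ := rfl
  right_inv _ := rfl

instance {n m : ℕ} {β : Type} [Fintype β] : Fintype (PSym n m β) :=
  Fintype.ofEquiv _ (PSym.equivProd n m β).symm

instance {n m : ℕ} {β : Type} : Nonempty (PSym n m β) := ⟨PSym.one n m β⟩

/-- The sequence of k bits of `j`, most significant first:  the root-to-leaf path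
(`false` = left, `true` = right) of the `j`-th leaf in the complete binary tree of depth `k`. -/
def bitsPath (k j : ℕ) : List Bool :=
  ((List.range k).reverse).map fun i => j.testBit i

/-- The root-to-leaf path of the leaf labeled `j` (0-indexed) in the balanced binary tree
with `m` leaves: the complete binary tree if `m` is a power of 2, and otherwise the complete
binary tree on `2 ^ ⌊log₂ m⌋` leaves with a pair of children added to each of the
`m - 2 ^ ⌊log₂ m⌋` leftmost leaves. -/
def treePath (m j : ℕ) : List Bool :=
  if m - 2 ^ Nat.log 2 m = 0 then bitsPath (Nat.log 2 m) j
  else if j < 2 * (m - 2 ^ Nat.log 2 m) then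
    bitsPath (Nat.log 2 m) (j / 2) ++ [j % 2 == 1]
  else bitsPath (Nat.log 2 m) (j - (m - 2 ^ Nat.log 2 m))

/-- Starting at cell `a` and following the left/right pointers of `x` as prescribed by the
list `p` of moves (`false` = left pointer, `true` = right pointer); returns `none` if a
null pointer is encountered. -/
def followPath {n m : ℕ} {β : Type} (x : Fin n × Fin m → PSym n m β)
    (a : Fin n × Fin m) (p : List Bool) : Option (Fin n × Fin m) :=
  p.foldl (fun acc b => acc.bind fun c => if b then (x c).rp else (x c).lp) (some a)

/-- The conditions for `x` to be a 1-input of `f_{n,m}`, with marked column `b` and special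
element `a`: (1) `b` is the unique all-1 column; (2) `a` is the unique cell of column `b`
with `x_a ≠ (1,⊥,⊥,⊥)`; (3) for every column `j ≠ b` the tree path from `a` to the leaf
labeled `j` exists, and ends at a cell `ℓ_j` of column `j` holding a 0; (4) the back pointer
of each `ℓ_j` points to the column `b`. -/
def fCond (n m : ℕ) (x : Fin n × Fin m → PSym n m (Fin m))
    (b : Fin m) (a : Fin n × Fin m) : Prop :=
  (∀ j : Fin m, (∀ i : Fin n, (x (i, j)).val = true) ↔ j = b) ∧
  a.2 = b ∧
  (∀ i : Fin n, x (i, b) ≠ PSym.one n m (Fin m) ↔ (i, b) = a) ∧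
  ∀ j : Fin m, j ≠ b →
    ∃ ℓ : Fin n × Fin m, followPath x a (treePath m j.1) = some ℓ ∧
      ℓ.2 = j ∧ (x ℓ).val = false ∧ (x ℓ).bp = some b

/-- The pointer function `f_{n,m}`, with back pointers to the marked column. -/
noncomputable def fFun (n m : ℕ) (x : Fin n × Fin m → PSym n m (Fin m)) : Bool :=
  if ∃ b a, fCond n m x b a then true else false

/-- The conditions for `x` to be a 1-input of `g_{n,m}`, with marked column `b` and special
element `a`: (1)–(3) as for `f_{n,m}`, and (4′) the set of columns `j ≠ b` whose highlighted
zero `ℓ_j` has back pointer to `a` has size exactly `m/2`. -/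
def gCond (n m : ℕ) (x : Fin n × Fin m → PSym n m (Fin n × Fin m))
    (b : Fin m) (a : Fin n × Fin m) : Prop :=
  (∀ j : Fin m, (∀ i : Fin n, (x (i, j)).val = true) ↔ j = b) ∧
  a.2 = b ∧
  (∀ i : Fin n, x (i, b) ≠ PSym.one n m (Fin n × Fin m) ↔ (i, b) = a) ∧
  (∀ j : Fin m, j ≠ b →
    ∃ ℓ : Fin n × Fin m, followPath x a (treePath m j.1) = some ℓ ∧
      ℓ.2 = j ∧ (x ℓ).val = false) ∧
  {j : Fin m | j ≠ b ∧ ∃ ℓ : Fin n × Fin m,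
      followPath x a (treePath m j.1) = some ℓ ∧ (x ℓ).bp = some a}.ncard = m / 2

/-- The pointer function `g_{n,m}`, where exactly `m/2` of the highlighted zeroes point
back to the special element. -/
noncomputable def gFun (n m : ℕ) (x : Fin n × Fin m → PSym n m (Fin n × Fin m)) : Bool :=
  if ∃ b a, gCond n m x b a then true else false

/-- Column `j` is good in `x` (for `g_{n,m}`): `x` is a 1-input with marked column `b ≠ j`
and special element `a`, and the highlighted zero of column `j` points back to `a`. -/
def goodColumn (n m : ℕ) (x : Fin n × Fin m → PSym n m (Fin n × Fin m)) (j : Fin m) : Prop :=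
  ∃ b a, gCond n m x b a ∧ j ≠ b ∧
    ∃ ℓ : Fin n × Fin m, followPath x a (treePath m j.1) = some ℓ ∧ (x ℓ).bp = some a

/-- The conditions for `x` to be a 1-input of `h_{k,n,m}`, with marked columns `b 0,…,b (k-1)`
and special elements `a 0,…,a (k-1)`: (1) the `b s` are exactly the all-1 columns; (2) `a s` is
the unique cell of column `b s` with `x_{a s} ≠ (1,⊥,⊥,⊥)`; (3) the internal pointers of the
`a s` form a cycle and all the `a s` have equal left pointers and equal right pointers;
(4) for every non-marked column `j` the tree path from any `a s` to the leaf labeled `j`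
exists and ends at a cell `ℓ_j` of column `j` holding a 0. -/
def hCond (k n m : ℕ) (x : Fin n × Fin m → PSym n m (Fin n × Fin m))
    (b : Fin k → Fin m) (a : Fin k → Fin n × Fin m) : Prop :=
  Function.Injective b ∧
  (∀ j : Fin m, (∀ i : Fin n, (x (i, j)).val = true) ↔ ∃ s, b s = j) ∧
  (∀ s, (a s).2 = b s) ∧
  (∀ s, ∀ i : Fin n, x (i, b s) ≠ PSym.one n m (Fin n × Fin m) ↔ (i, b s) = a s) ∧
  (∀ s : Fin k, (x (a s)).bp = some (a ⟨(s.1 + 1) % k, Nat.mod_lt _ s.pos⟩)) ∧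
  (∀ s t : Fin k, (x (a s)).lp = (x (a t)).lp ∧ (x (a s)).rp = (x (a t)).rp) ∧
  ∀ j : Fin m, (∀ s, b s ≠ j) → ∀ s : Fin k,
    ∃ ℓ : Fin n × Fin m, followPath x (a s) (treePath m j.1) = some ℓ ∧
      ℓ.2 = j ∧ (x ℓ).val = false

/-- The pointer function `h_{k,n,m}` with `k` marked columns and no back pointers. -/
noncomputable def hFun (k n m : ℕ) (x : Fin n × Fin m → PSym n m (Fin n × Fin m)) : Bool :=
  if ∃ b a, hCond k n m x b a then true else false

/-- The hard input `x^ℓ`: cell `(i,j)` holds `(0,⊥,⊥,⊥)` if `i = ℓ j` and `(1,⊥,⊥,⊥)`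
otherwise. -/
def xhard (n m : ℕ) (β : Type) (ℓ : Fin m → Fin n) : Fin n × Fin m → PSym n m β :=
  fun c => if c.1 = ℓ c.2 then PSym.zero n m β else PSym.one n m β

/-- The set of (distinct) cells queried among the first `t` queries of `T` on input `x`. -/
def queriedUpTo {ι σ : Type} [DecidableEq ι] (T : DTree ι σ) (x : ι → σ) (t : ℕ) :
    Finset ι :=
  ((T.queryList x).take t).toFinset
/-! ### The progress measure for the hard distribution `x^ℓ` -/

/-- Column `j` is compromised (for the input `x^ℓ`), given the set `Q` of queried cells:
the zero cell `(ℓ j, j)` has been queried, or more than `n/2` cells of column `j` have been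
queried. -/
def compromisedCol (n m : ℕ) (ℓ : Fin m → Fin n) (Q : Finset (Fin n × Fin m))
    (j : Fin m) : Prop :=
  (ℓ j, j) ∈ Q ∨ n < 2 * (Q.filter fun c => c.2 = j).card

/-- The progress measure `I_t = A_t + (2/n)·B_t` of the decision tree `T` on the input `x^ℓ`
after `t` queries, where `A_t` is the number of compromised columns and `B_t` is the number
of queried cells lying outside compromised columns. -/
noncomputable def Imeasure (n m : ℕ)
    (T : DTree (Fin n × Fin m) (PSym n m (Fin n × Fin m))) (ℓ : Fin m → Fin n) (t : ℕ) : ℝ :=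
  ({j : Fin m |
      compromisedCol n m ℓ (queriedUpTo T (xhard n m (Fin n × Fin m) ℓ) t) j}.ncard : ℝ) +
    (2 / n) * ({c : Fin n × Fin m | c ∈ queriedUpTo T (xhard n m (Fin n × Fin m) ℓ) t ∧
      ¬ compromisedCol n m ℓ (queriedUpTo T (xhard n m (Fin n × Fin m) ℓ) t) c.2}.ncard : ℝ)
/-! ### The balanced binary tree, via root-to-node paths -/

/-- The node set of the balanced binary tree with `m` leaves: each node is identified with
the left/right path from the root to it, so the nodes are exactly the prefixes of the
root-to-leaf paths. -/
def treeNodes (m : ℕ) : Finset (List Bool) :=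
  (Finset.range m).biUnion fun j => (treePath m j).inits.toFinset

/-- The leaves of the balanced binary tree with `m` leaves. -/
def leafNodes (m : ℕ) : Finset (List Bool) :=
  (Finset.range m).image fun j => treePath m j

/-- The internal nodes of the balanced binary tree with `m` leaves. -/
def internalNodes (m : ℕ) : Finset (List Bool) :=
  treeNodes m \ leafNodes m

/-- The subtree rooted at a node `u`: all nodes of which `u` is a prefix. -/
def subtreeOf (m : ℕ) (u : List Bool) : Finset (List Bool) :=
  (treeNodes m).filter fun w => u <+: w

/-! ### The hard distribution for `h_{1,n,m}` -/

/-- A parameter quadruple `(v, π, ℓᴸ, ℓᴺ)` for the hard distribution: a bit `v`, a map `π`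
from internal tree nodes to columns, and row maps `ℓᴸ, ℓᴺ` for leaves resp. internal nodes. -/
abbrev HardQ (n m : ℕ) : Type :=
  Bool × ({u : List Bool // u ∈ internalNodes m} → Fin m) × (Fin m → Fin n) × (Fin m → Fin n)

/-- The valid parameter quadruples: `π` injective and `ℓᴸ j ≠ ℓᴺ j` for all `j`. -/
noncomputable def hardSet (n m : ℕ) : Finset (HardQ n m) :=
  Finset.univ.filter fun q => Function.Injective q.2.1 ∧ ∀ j, q.2.2.1 j ≠ q.2.2.2 j

/-- The column of the root of the tree (`none` if the tree has no internal node). -/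
noncomputable def rootCol (n m : ℕ) (q : HardQ n m) : Option (Fin m) :=
  if h : ([] : List Bool) ∈ internalNodes m then some (q.2.1 ⟨[], h⟩) else none

/-- The cell where a child node `w` of an internal node is placed: internal nodes go to
cell `(ℓᴺ (π w), π w)`, the leaf labeled `j` goes to cell `(ℓᴸ j, j)`, and the removed leaf
(the one labeled by the root's column) yields a null pointer. -/
noncomputable def childCell (n m : ℕ) (q : HardQ n m) (w : List Bool) :
    Option (Fin n × Fin m) :=
  if h : w ∈ internalNodes m then some (q.2.2.2 (q.2.1 ⟨w, h⟩), q.2.1 ⟨w, h⟩)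
  else if h2 : ∃ j : Fin m, w = treePath m j.1 ∧ some j ≠ rootCol n m q then
    some (q.2.2.1 (Classical.choose h2), Classical.choose h2)
  else none

/-- The input of the hard distribution determined by the parameter quadruple `q`:
the internal node `u` of the tree is placed at cell `(ℓᴺ (π u), π u)` with left and right
pointers to the cells of its children, value `v` and a self-loop internal pointer if `u` is
the root, and value 0 otherwise; for `j ≠ π(root)`, the leaf labeled `j` is placed at cell
`(ℓᴸ j, j)` with value 0 and null pointers; all the remaining cells hold `(1,⊥,⊥,⊥)`. -/
noncomputable def hardInput (n m : ℕ) (q : HardQ n m) :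
    Fin n × Fin m → PSym n m (Fin n × Fin m) :=
  fun c =>
    if h : ∃ u : {u : List Bool // u ∈ internalNodes m}, q.2.1 u = c.2 ∧ q.2.2.2 c.2 = c.1 then
      { val := if (Classical.choose h).1 = [] then q.1 else false
        lp := childCell n m q ((Classical.choose h).1 ++ [false])
        rp := childCell n m q ((Classical.choose h).1 ++ [true])
        bp := if (Classical.choose h).1 = [] then some c else none }
    else if some c.2 ≠ rootCol n m q ∧ c.1 = q.2.2.1 c.2 then PSym.zero n m (Fin n × Fin m)
    else PSym.one n m (Fin n × Fin m)

/-- Column `j` directly satisfies (i) or (ii): one of the cells `(ℓᴸ j, j)`, `(ℓᴺ j, j)` has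
been queried, or more than half of the cells of column `j` have been queried. -/
def colBad (n m : ℕ) (q : HardQ n m) (Q : Finset (Fin n × Fin m)) (j : Fin m) : Prop :=
  (q.2.2.1 j, j) ∈ Q ∨ (q.2.2.2 j, j) ∈ Q ∨ n < 2 * (Q.filter fun c => c.2 = j).card

/-- Column `j` is compromised: it satisfies (i) or (ii), or some ancestor `u` of `π⁻¹(j)`
in the tree is such that column `π u` satisfies (i) or (ii). -/
def compromisedCol19 (n m : ℕ) (q : HardQ n m) (Q : Finset (Fin n × Fin m))
    (j : Fin m) : Prop :=
  colBad n m q Q j ∨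
  ∃ w u : {u : List Bool // u ∈ internalNodes m}, q.2.1 w = j ∧
    u.1 <+: w.1 ∧ u.1 ≠ w.1 ∧ colBad n m q Q (q.2.1 u)

/-- The progress measure `I_t = min{A_t + (4·C0·log₂ m / n)·B_t, m/2}` of the decision tree
`D` on the hard-distribution input given by `q` after `t` queries, where `A_t` is the number
of compromised columns and `B_t` the number of queried cells outside compromised columns. -/
noncomputable def Imeasure19 (n m : ℕ) (C0 : ℝ)
    (D : DTree (Fin n × Fin m) (PSym n m (Fin n × Fin m))) (q : HardQ n m) (t : ℕ) : ℝ :=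
  min
    (({j : Fin m | compromisedCol19 n m q (queriedUpTo D (hardInput n m q) t) j}.ncard : ℝ) +
      (4 * C0 * Real.logb 2 m / n) *
        ({c : Fin n × Fin m | c ∈ queriedUpTo D (hardInput n m q) t ∧
          ¬ compromisedCol19 n m q (queriedUpTo D (hardInput n m q) t) c.2}.ncard : ℝ))
    (m / 2)
namespace Stmt6

variable {n m : ℕ}

/-- The consistent-set per column. -/
noncomputable def Sfun (z : Fin m → Option (Fin n)) (R : Fin m → Finset (Fin n)) :
    Fin m → Finset (Fin n) := fun j =>
  match z j with
  | some i => {i}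
  | none => (R j)ᶜ

noncomputable def Lset (z : Fin m → Option (Fin n)) (R : Fin m → Finset (Fin n)) :
    Finset (Fin m → Fin n) := Fintype.piFinset (Sfun z R)

/-- Number of newly-discovered zero cells. -/
noncomputable def Fcnt (T : DTree (Fin n × Fin m) (PSym n m (Fin n × Fin m)))
    (z : Fin m → Option (Fin n)) (ℓ : Fin m → Fin n) : ℕ :=
  (Finset.univ.filter fun j => z j = none ∧
    (ℓ j, j) ∈ (T.queryList (xhard n m (Fin n × Fin m) ℓ)).toFinset).card

noncomputable def potv (z : Fin m → Option (Fin n)) (R : Fin m → Finset (Fin n)) : ℕ :=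
  ∑ j : Fin m, if z j = none then (R j).card else 0

lemma Sfun_some {z : Fin m → Option (Fin n)} {R : Fin m → Finset (Fin n)} {j : Fin m}
    {i : Fin n} (h : z j = some i) : Sfun z R j = {i} := by simp [Sfun, h]

lemma Sfun_none {z : Fin m → Option (Fin n)} {R : Fin m → Finset (Fin n)} {j : Fin m}
    (h : z j = none) : Sfun z R j = (R j)ᶜ := by simp [Sfun, h]

lemma xhard_zero {ℓ : Fin m → Fin n} {i : Fin n} {j : Fin m} (h : ℓ j = i) :
    xhard n m (Fin n × Fin m) ℓ (i, j) = PSym.zero n m (Fin n × Fin m) := by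
  simp [xhard, h]

lemma xhard_one {ℓ : Fin m → Fin n} {i : Fin n} {j : Fin m} (h : ℓ j ≠ i) :
    xhard n m (Fin n × Fin m) ℓ (i, j) = PSym.one n m (Fin n × Fin m) := by
  have : ¬ ((i, j) : Fin n × Fin m).1 = ℓ ((i, j) : Fin n × Fin m).2 := fun hh => h hh.symm
  simp [xhard, this]

lemma cost_node (child : PSym n m (Fin n × Fin m) → DTree (Fin n × Fin m) (PSym n m (Fin n × Fin m)))
    (σ : PSym n m (Fin n × Fin m)) (ℓ : Fin m → Fin n) (i : Fin n) (j : Fin m)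
    (hx : xhard n m (Fin n × Fin m) ℓ (i, j) = σ) :
    (DTree.node (i, j) child).cost (xhard n m (Fin n × Fin m) ℓ) =
      (child σ).cost (xhard n m (Fin n × Fin m) ℓ) + 1 := by
  simp [DTree.cost, DTree.queryList, hx]

lemma Fcnt_node_of_ne
    (child : PSym n m (Fin n × Fin m) → DTree (Fin n × Fin m) (PSym n m (Fin n × Fin m)))
    (σ : PSym n m (Fin n × Fin m)) (z : Fin m → Option (Fin n)) (ℓ : Fin m → Fin n)
    (i : Fin n) (j : Fin m)
    (hx : xhard n m (Fin n × Fin m) ℓ (i, j) = σ)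
    (hne : ∀ k, z k = none → ((ℓ k, k) : Fin n × Fin m) ≠ (i, j)) :
    Fcnt (DTree.node (i, j) child) z ℓ = Fcnt (child σ) z ℓ := by
  unfold Fcnt
  congr 1
  apply Finset.filter_congr
  intro k _
  simp only [DTree.queryList, hx, List.toFinset_cons, Finset.mem_insert]
  constructor
  · rintro ⟨hzk, h | h⟩
    · exact absurd h (hne k hzk)
    · exact ⟨hzk, h⟩
  · rintro ⟨hzk, h⟩
    exact ⟨hzk, Or.inr h⟩

lemma Fcnt_node_zero
    (child : PSym n m (Fin n × Fin m) → DTree (Fin n × Fin m) (PSym n m (Fin n × Fin m)))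
    (z : Fin m → Option (Fin n)) (ℓ : Fin m → Fin n) (i : Fin n) (j : Fin m)
    (hzj : z j = none) (hlj : ℓ j = i) :
    Fcnt (DTree.node (i, j) child) z ℓ =
      Fcnt (child (PSym.zero n m (Fin n × Fin m))) (Function.update z j (some i)) ℓ + 1 := by
  have hx := xhard_zero hlj
  unfold Fcnt
  have hj : j ∉ (Finset.univ.filter fun k => Function.update z j (some i) k = none ∧
      (ℓ k, k) ∈ ((child (PSym.zero n m (Fin n × Fin m))).queryList
        (xhard n m (Fin n × Fin m) ℓ)).toFinset) := by
    simp [Function.update_self]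
  rw [← Finset.card_insert_of_notMem hj]
  congr 1
  ext k
  simp only [Finset.mem_insert, Finset.mem_filter, Finset.mem_univ, true_and,
    DTree.queryList, hx, List.toFinset_cons, Finset.mem_insert]
  constructor
  · rintro ⟨hzk, h | h⟩
    · exact Or.inl (congrArg Prod.snd h)
    · by_cases hk : k = j
      · exact Or.inl hk
      · exact Or.inr ⟨by rwa [Function.update_of_ne hk], h⟩
  · rintro (rfl | ⟨hzk, h⟩)
    · exact ⟨hzj, Or.inl (by rw [hlj])⟩
    · have hk : k ≠ j := by
        intro hh; subst hh; rw [Function.update_self] at hzk; cases hzk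
      exact ⟨by rwa [Function.update_of_ne hk] at hzk, Or.inr h⟩

lemma key (T : DTree (Fin n × Fin m) (PSym n m (Fin n × Fin m))) :
    ∀ (z : Fin m → Option (Fin n)) (R : Fin m → Finset (Fin n)),
    (n + 1) * ∑ ℓ ∈ Lset z R, Fcnt T z ℓ ≤
      2 * ∑ ℓ ∈ Lset z R, T.cost (xhard n m (Fin n × Fin m) ℓ) +
        (Lset z R).card * potv z R := by
  induction T with
  | leaf b =>
    intro z R
    simp [Fcnt, DTree.queryList]
  | node v child ih =>
    intro z R
    obtain ⟨i, j⟩ := v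
    rcases hzc : z j with _ | i0
    case node.some =>
      -- known zero in column j : deterministic edge
      have hlj : ∀ ℓ ∈ Lset z R, ℓ j = i0 := by
        intro ℓ hℓ
        have := (Fintype.mem_piFinset.mp hℓ) j
        rw [Sfun_some hzc] at this
        exact Finset.mem_singleton.mp this
      set σ : PSym n m (Fin n × Fin m) :=
        if i = i0 then PSym.zero n m (Fin n × Fin m) else PSym.one n m (Fin n × Fin m) with hσ
      have hx : ∀ ℓ ∈ Lset z R, xhard n m (Fin n × Fin m) ℓ (i, j) = σ := by
        intro ℓ hℓ
        by_cases hi : i = i0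
        · rw [hσ, if_pos hi]; exact xhard_zero ((hlj ℓ hℓ).trans hi.symm)
        · rw [hσ, if_neg hi]
          exact xhard_one (fun hh => hi ((hlj ℓ hℓ) ▸ hh).symm)
      have hne : ∀ ℓ ∈ Lset z R, ∀ k, z k = none →
          ((ℓ k, k) : Fin n × Fin m) ≠ (i, j) := by
        intro ℓ hℓ k hzk heq
        have hkj : k = j := congrArg Prod.snd heq
        subst hkj; rw [hzc] at hzk; cases hzk
      calc (n + 1) * ∑ ℓ ∈ Lset z R, Fcnt (DTree.node (i, j) child) z ℓ
          = (n + 1) * ∑ ℓ ∈ Lset z R, Fcnt (child σ) z ℓ := by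
            congr 1
            exact Finset.sum_congr rfl fun ℓ hℓ =>
              Fcnt_node_of_ne child σ z ℓ i j (hx ℓ hℓ) (hne ℓ hℓ)
        _ ≤ 2 * ∑ ℓ ∈ Lset z R, (child σ).cost (xhard n m (Fin n × Fin m) ℓ) +
              (Lset z R).card * potv z R := ih σ z R
        _ ≤ 2 * ∑ ℓ ∈ Lset z R, (DTree.node (i, j) child).cost (xhard n m (Fin n × Fin m) ℓ) +
              (Lset z R).card * potv z R := by
            refine Nat.add_le_add_right (Nat.mul_le_mul_left 2 ?_) _
            refine Finset.sum_le_sum fun ℓ hℓ => ?_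
            rw [cost_node child σ ℓ i j (hx ℓ hℓ)]
            exact Nat.le_succ _
    case node.none =>
      by_cases hiR : i ∈ R j
      · -- known one at (i,j) : deterministic edge
        have hlj : ∀ ℓ ∈ Lset z R, ℓ j ≠ i := by
          intro ℓ hℓ hh
          have := (Fintype.mem_piFinset.mp hℓ) j
          rw [Sfun_none hzc] at this
          exact (Finset.mem_compl.mp this) (hh ▸ hiR)
        have hx : ∀ ℓ ∈ Lset z R, xhard n m (Fin n × Fin m) ℓ (i, j) =
            PSym.one n m (Fin n × Fin m) := fun ℓ hℓ => xhard_one (hlj ℓ hℓ)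
        have hne : ∀ ℓ ∈ Lset z R, ∀ k, z k = none →
            ((ℓ k, k) : Fin n × Fin m) ≠ (i, j) := by
          intro ℓ hℓ k _ heq
          have hkj : k = j := congrArg Prod.snd heq
          subst hkj
          exact hlj ℓ hℓ (congrArg Prod.fst heq)
        calc (n + 1) * ∑ ℓ ∈ Lset z R, Fcnt (DTree.node (i, j) child) z ℓ
            = (n + 1) * ∑ ℓ ∈ Lset z R,
                Fcnt (child (PSym.one n m (Fin n × Fin m))) z ℓ := by
              congr 1
              exact Finset.sum_congr rfl fun ℓ hℓ =>
                Fcnt_node_of_ne child _ z ℓ i j (hx ℓ hℓ) (hne ℓ hℓ)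
          _ ≤ 2 * ∑ ℓ ∈ Lset z R, (child (PSym.one n m (Fin n × Fin m))).cost
                (xhard n m (Fin n × Fin m) ℓ) + (Lset z R).card * potv z R :=
              ih _ z R
          _ ≤ 2 * ∑ ℓ ∈ Lset z R,
                (DTree.node (i, j) child).cost (xhard n m (Fin n × Fin m) ℓ) +
                (Lset z R).card * potv z R := by
              refine Nat.add_le_add_right (Nat.mul_le_mul_left 2 ?_) _
              refine Finset.sum_le_sum fun ℓ hℓ => ?_
              rw [cost_node child _ ℓ i j (hx ℓ hℓ)]
              exact Nat.le_succ _
      · -- fresh query : the split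
        obtain ⟨s, hns⟩ : ∃ s, n = (R j).card + s + 1 := by
          refine ⟨n - (R j).card - 1, ?_⟩
          have hlt : (R j).card < n := by
            have hne : R j ≠ Finset.univ := fun h => hiR (h ▸ Finset.mem_univ i)
            have := (Finset.card_lt_iff_ne_univ (R j)).mpr hne
            rwa [Fintype.card_fin] at this
          omega
        set z' := Function.update z j (some i) with hz'
        set R' := Function.update R j (insert i (R j)) with hR'
        have hS0 : ∀ k, k ≠ j → Sfun z' R k = Sfun z R k := by
          intro k hk; simp only [Sfun, hz', Function.update_of_ne hk]
        have hS1 : ∀ k, k ≠ j → Sfun z R' k = Sfun z R k := by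
          intro k hk; simp only [Sfun, hR', Function.update_of_ne hk]
        have hSj : Sfun z R j = (R j)ᶜ := Sfun_none hzc
        have hz'j : z' j = some i := by rw [hz', Function.update_self]
        have hR'j : R' j = insert i (R j) := by rw [hR', Function.update_self]
        have hSj0 : Sfun z' R j = {i} := Sfun_some hz'j
        have hSj1 : Sfun z R' j = (insert i (R j))ᶜ := by
          rw [Sfun_none hzc, hR'j]
        -- sum splitting
        have hsplit : ∀ (f : (Fin m → Fin n) → ℕ),
            ∑ ℓ ∈ Lset z R, f ℓ = ∑ ℓ ∈ Lset z' R, f ℓ + ∑ ℓ ∈ Lset z R', f ℓ := by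
          intro f
          rw [← Finset.sum_filter_add_sum_filter_not (Lset z R) (fun ℓ => ℓ j = i) f]
          congr 1
          · refine Finset.sum_congr ?_ fun _ _ => rfl
            ext ℓ
            simp only [Finset.mem_filter, Lset, Fintype.mem_piFinset]
            constructor
            · rintro ⟨hall, hji⟩ k
              by_cases hk : k = j
              · subst hk; rw [hSj0]; exact Finset.mem_singleton.mpr hji
              · rw [hS0 k hk]; exact hall k
            · intro hall
              have hji : ℓ j = i := by
                have := hall j; rw [hSj0] at this; exact Finset.mem_singleton.mp this
              refine ⟨fun k => ?_, hji⟩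
              by_cases hk : k = j
              · subst hk; rw [hSj]
                exact Finset.mem_compl.mpr (by rw [hji]; exact hiR)
              · rw [← hS0 k hk]; exact hall k
          · refine Finset.sum_congr ?_ fun _ _ => rfl
            ext ℓ
            simp only [Finset.mem_filter, Lset, Fintype.mem_piFinset]
            constructor
            · rintro ⟨hall, hji⟩ k
              by_cases hk : k = j
              · subst hk; rw [hSj1]
                refine Finset.mem_compl.mpr fun hmem => ?_
                rcases Finset.mem_insert.mp hmem with h | h
                · exact hji h
                · have := hall k; rw [hSj] at this
                  exact (Finset.mem_compl.mp this) h
              · rw [hS1 k hk]; exact hall k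
            · intro hall
              have hj1 := hall j
              rw [hSj1] at hj1
              have hj1 := Finset.mem_compl.mp hj1
              refine ⟨fun k => ?_, fun hh => hj1 (hh ▸ Finset.mem_insert_self i (R j))⟩
              by_cases hk : k = j
              · subst hk; rw [hSj]
                exact Finset.mem_compl.mpr fun hmem => hj1 (Finset.mem_insert_of_mem hmem)
              · rw [← hS1 k hk]; exact hall k
        -- cardinalities
        have hCprod : ∀ (S : Fin m → Finset (Fin n)), (Fintype.piFinset S).card
            = (S j).card * ∏ k ∈ Finset.univ.erase j, (S k).card := by
          intro S
          rw [Fintype.card_piFinset, ← Finset.mul_prod_erase _ _ (Finset.mem_univ j)]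
        set C := ∏ k ∈ Finset.univ.erase j, (Sfun z R k).card with hC
        have hprod0 : ∏ k ∈ Finset.univ.erase j, (Sfun z' R k).card = C :=
          Finset.prod_congr rfl fun k hk => by rw [hS0 k (Finset.ne_of_mem_erase hk)]
        have hprod1 : ∏ k ∈ Finset.univ.erase j, (Sfun z R' k).card = C :=
          Finset.prod_congr rfl fun k hk => by rw [hS1 k (Finset.ne_of_mem_erase hk)]
        have hcardL : (Lset z R).card = (s + 1) * C := by
          rw [Lset, hCprod, hSj, Finset.card_compl, Fintype.card_fin]
          congr 1
          omega
        have hcardL0 : (Lset z' R).card = C := by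
          rw [Lset, hCprod, hSj0, hprod0, Finset.card_singleton, one_mul]
        have hcardL1 : (Lset z R').card = s * C := by
          rw [Lset, hCprod, hSj1, hprod1, Finset.card_compl, Fintype.card_fin,
            Finset.card_insert_of_notMem hiR]
          congr 1
          omega
        -- potentials
        have hpot_split : ∀ (g : Fin m → ℕ),
            ∑ k, g k = g j + ∑ k ∈ Finset.univ.erase j, g k :=
          fun g => (Finset.add_sum_erase _ g (Finset.mem_univ j)).symm
        have hperase0 : ∑ k ∈ Finset.univ.erase j, (if z' k = none then (R k).card else 0)
            = ∑ k ∈ Finset.univ.erase j, (if z k = none then (R k).card else 0) :=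
          Finset.sum_congr rfl fun k hk => by
            simp only [hz', Function.update_of_ne (Finset.ne_of_mem_erase hk)]
        have hperase1 : ∑ k ∈ Finset.univ.erase j, (if z k = none then (R' k).card else 0)
            = ∑ k ∈ Finset.univ.erase j, (if z k = none then (R k).card else 0) :=
          Finset.sum_congr rfl fun k hk => by
            simp only [hR', Function.update_of_ne (Finset.ne_of_mem_erase hk)]
        have hpot0 : potv z R = potv z' R + (R j).card := by
          unfold potv
          rw [hpot_split (fun k => if z k = none then (R k).card else 0),
            hpot_split (fun k => if z' k = none then (R k).card else 0), hperase0]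
          simp only [hzc, hz'j, if_pos, reduceCtorEq, if_false]
          omega
        have hpot1 : potv z R' = potv z' R + (R j).card + 1 := by
          unfold potv
          rw [hpot_split (fun k => if z k = none then (R' k).card else 0),
            hpot_split (fun k => if z' k = none then (R k).card else 0), hperase0, hperase1]
          simp only [hzc, hz'j, if_pos, reduceCtorEq, if_false, hR'j,
            Finset.card_insert_of_notMem hiR]
          omega
        -- per-element rewrites
        have hmem0 : ∀ ℓ ∈ Lset z' R, ℓ j = i := by
          intro ℓ hℓ
          have := (Fintype.mem_piFinset.mp hℓ) j
          rw [hSj0] at this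
          exact Finset.mem_singleton.mp this
        have hmem1 : ∀ ℓ ∈ Lset z R', ℓ j ≠ i := by
          intro ℓ hℓ hh
          have := (Fintype.mem_piFinset.mp hℓ) j
          rw [hSj1] at this
          exact (Finset.mem_compl.mp this) (hh ▸ Finset.mem_insert_self i (R j))
        have hF0 : ∀ ℓ ∈ Lset z' R, Fcnt (DTree.node (i, j) child) z ℓ =
            Fcnt (child (PSym.zero n m (Fin n × Fin m))) z' ℓ + 1 := fun ℓ hℓ =>
          Fcnt_node_zero child z ℓ i j hzc (hmem0 ℓ hℓ)
        have hc0 : ∀ ℓ ∈ Lset z' R,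
            (DTree.node (i, j) child).cost (xhard n m (Fin n × Fin m) ℓ) =
            (child (PSym.zero n m (Fin n × Fin m))).cost (xhard n m (Fin n × Fin m) ℓ) + 1 :=
          fun ℓ hℓ => cost_node child _ ℓ i j (xhard_zero (hmem0 ℓ hℓ))
        have hF1 : ∀ ℓ ∈ Lset z R', Fcnt (DTree.node (i, j) child) z ℓ =
            Fcnt (child (PSym.one n m (Fin n × Fin m))) z ℓ := by
          intro ℓ hℓ
          refine Fcnt_node_of_ne child _ z ℓ i j (xhard_one (hmem1 ℓ hℓ)) ?_
          intro k _ heq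
          have hkj : k = j := congrArg Prod.snd heq
          subst hkj
          exact hmem1 ℓ hℓ (congrArg Prod.fst heq)
        have hc1 : ∀ ℓ ∈ Lset z R',
            (DTree.node (i, j) child).cost (xhard n m (Fin n × Fin m) ℓ) =
            (child (PSym.one n m (Fin n × Fin m))).cost (xhard n m (Fin n × Fin m) ℓ) + 1 :=
          fun ℓ hℓ => cost_node child _ ℓ i j (xhard_one (hmem1 ℓ hℓ))
        -- assemble
        rw [hsplit (Fcnt (DTree.node (i, j) child) z),
          hsplit (fun ℓ => (DTree.node (i, j) child).cost (xhard n m (Fin n × Fin m) ℓ)),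
          Finset.sum_congr rfl hF0, Finset.sum_congr rfl hF1,
          Finset.sum_congr rfl hc0, Finset.sum_congr rfl hc1,
          Finset.sum_add_distrib, Finset.sum_add_distrib, Finset.sum_add_distrib,
          Finset.sum_const, Finset.sum_const, smul_eq_mul, mul_one, smul_eq_mul, mul_one]
        have IH0 := ih (PSym.zero n m (Fin n × Fin m)) z' R
        have IH1 := ih (PSym.one n m (Fin n × Fin m)) z R'
        have hn1 : n + 1 = (R j).card + s + 2 := by omega
        rw [hcardL0, hn1] at IH0
        rw [hcardL1, hpot1, hn1] at IH1
        rw [hcardL, hpot0, hcardL0, hcardL1, hn1]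
        nlinarith [IH0, IH1]


lemma Lset_univ :
    Lset (fun _ : Fin m => (none : Option (Fin n))) (fun _ => (∅ : Finset (Fin n))) =
      Finset.univ := by
  rw [Lset]
  have h : Sfun (fun _ : Fin m => (none : Option (Fin n))) (fun _ => (∅ : Finset (Fin n)))
      = fun _ => (Finset.univ : Finset (Fin n)) := by
    funext j
    rw [Sfun_none rfl, Finset.compl_empty]
  rw [h, Fintype.piFinset_univ]

lemma potv_zero :
    potv (fun _ : Fin m => (none : Option (Fin n))) (fun _ => (∅ : Finset (Fin n))) = 0 := by
  simp [potv]

lemma Fcnt_eq (T : DTree (Fin n × Fin m) (PSym n m (Fin n × Fin m))) (ℓ : Fin m → Fin n) :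
    ((T.queryList (xhard n m (Fin n × Fin m) ℓ)).toFinset.filter
      fun c => (xhard n m (Fin n × Fin m) ℓ c).val = false).card
    = Fcnt T (fun _ => none) ℓ := by
  have hvf : ∀ c : Fin n × Fin m,
      (xhard n m (Fin n × Fin m) ℓ c).val = false → c = (ℓ c.2, c.2) := by
    intro c hc
    have h1 : c.1 = ℓ c.2 := by
      by_contra hne
      have : xhard n m (Fin n × Fin m) ℓ c = PSym.one n m (Fin n × Fin m) := by
        simp [xhard, hne]
      rw [this] at hc
      exact absurd hc (by simp [PSym.one])
    exact Prod.ext h1 rfl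
  unfold Fcnt
  apply Finset.card_bij (i := fun c _ => c.2)
  · intro c hc
    obtain ⟨hcmem, hcval⟩ := Finset.mem_filter.mp hc
    simp only [Finset.mem_filter, Finset.mem_univ, true_and]
    rw [← hvf c hcval]
    exact hcmem
  · intro a ha b hb h
    obtain ⟨_, hav⟩ := Finset.mem_filter.mp ha
    obtain ⟨_, hbv⟩ := Finset.mem_filter.mp hb
    rw [hvf a hav, hvf b hbv, h]
  · intro j hj
    simp only [Finset.mem_filter, Finset.mem_univ, true_and] at hj
    refine ⟨(ℓ j, j), Finset.mem_filter.mpr ⟨hj, ?_⟩, rfl⟩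
    rw [xhard_zero rfl]
    rfl

end Stmt6
/-- A deterministic decision tree rejecting every hard-distribution input
`x^ℓ` that, on each `x^ℓ`, either finds at least `c₁·m` zeroes or queries at least `c₂·n·m`
cells, has expected cost at least `(1/2)·min(⌊c₁·n·m/8⌋, c₂·n·m)` over uniform `ℓ`. -/
theorem statement6 (n m : ℕ) (hn : 2 ≤ n) (hm : 2 ≤ m)
    (c1 c2 : ℝ) (hc1 : 0 < c1) (hc2 : 0 < c2)
    (T : DTree (Fin n × Fin m) (PSym n m (Fin n × Fin m)))
    (hrej : ∀ ℓ : Fin m → Fin n, T.eval (xhard n m (Fin n × Fin m) ℓ) = false)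
    (hcond : ∀ ℓ : Fin m → Fin n,
      c1 * m ≤ (((T.queryList (xhard n m (Fin n × Fin m) ℓ)).toFinset.filter
          fun c => (xhard n m (Fin n × Fin m) ℓ c).val = false).card : ℝ) ∨
      c2 * n * m ≤ ((T.queryList (xhard n m (Fin n × Fin m) ℓ)).toFinset.card : ℝ)) :
    (1 / 2) * min ((⌊c1 * (n : ℝ) * m / 8⌋ : ℝ)) (c2 * n * m) ≤
      (∑ ℓ : Fin m → Fin n, (T.cost (xhard n m (Fin n × Fin m) ℓ) : ℝ)) /
        (Fintype.card (Fin m → Fin n) : ℝ) := by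
  classical
  have hkey := Stmt6.key T (fun _ => none) (fun _ => ∅)
  rw [Stmt6.Lset_univ, Stmt6.potv_zero, mul_zero, add_zero] at hkey
  set Z : (Fin m → Fin n) → ℕ := fun ℓ =>
    ((T.queryList (xhard n m (Fin n × Fin m) ℓ)).toFinset.filter
      fun c => (xhard n m (Fin n × Fin m) ℓ c).val = false).card with hZdef
  have hZF : ∑ ℓ : Fin m → Fin n, Z ℓ = ∑ ℓ : Fin m → Fin n, Stmt6.Fcnt T (fun _ => none) ℓ :=
    Finset.sum_congr rfl fun ℓ _ => Stmt6.Fcnt_eq T ℓ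
  rw [← hZF] at hkey
  have hK : (0 : ℝ) < (Fintype.card (Fin m → Fin n) : ℝ) := by
    have h0 : 0 < Fintype.card (Fin m → Fin n) :=
      Fintype.card_pos_iff.mpr ⟨fun _ => ⟨0, by omega⟩⟩
    exact_mod_cast h0
  set S := ∑ ℓ : Fin m → Fin n, (T.cost (xhard n m (Fin n × Fin m) ℓ) : ℝ) with hSdef
  have hkeyR : ((n : ℝ) + 1) * ∑ ℓ : Fin m → Fin n, (Z ℓ : ℝ) ≤ 2 * S := by
    rw [hSdef]
    exact_mod_cast hkey
  set A : Finset (Fin m → Fin n) := Finset.univ.filter (fun ℓ => c1 * m ≤ (Z ℓ : ℝ)) with hAdef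
  have hmn : (0 : ℝ) ≤ (m : ℝ) := by positivity
  have h1 : (A.card : ℝ) * (c1 * m) ≤ ∑ ℓ : Fin m → Fin n, (Z ℓ : ℝ) := by
    calc (A.card : ℝ) * (c1 * m) = ∑ _ℓ ∈ A, (c1 * m) := by
          rw [Finset.sum_const, nsmul_eq_mul]
      _ ≤ ∑ ℓ ∈ A, (Z ℓ : ℝ) :=
          Finset.sum_le_sum fun ℓ hℓ => (Finset.mem_filter.mp hℓ).2
      _ ≤ ∑ ℓ : Fin m → Fin n, (Z ℓ : ℝ) :=
          Finset.sum_le_sum_of_subset_of_nonneg (Finset.subset_univ A)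
            (by intro ℓ _ _; positivity)
  have h3 : ((Finset.univ \ A).card : ℝ) * (c2 * n * m) ≤ S := by
    have h2 : ∀ ℓ ∈ Finset.univ \ A, c2 * n * m ≤ (T.cost (xhard n m (Fin n × Fin m) ℓ) : ℝ) := by
      intro ℓ hℓ
      rw [hAdef, Finset.mem_sdiff, Finset.mem_filter] at hℓ
      have hnot : ¬ (c1 * m ≤ (Z ℓ : ℝ)) := fun hh => hℓ.2 ⟨Finset.mem_univ ℓ, hh⟩
      rcases hcond ℓ with h | h
      · exact absurd h hnot
      · refine le_trans h ?_
        have hle := List.toFinset_card_le (T.queryList (xhard n m (Fin n × Fin m) ℓ))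
        exact_mod_cast hle
    calc ((Finset.univ \ A).card : ℝ) * (c2 * n * m)
        = ∑ _ℓ ∈ Finset.univ \ A, (c2 * n * m) := by rw [Finset.sum_const, nsmul_eq_mul]
      _ ≤ ∑ ℓ ∈ Finset.univ \ A, (T.cost (xhard n m (Fin n × Fin m) ℓ) : ℝ) :=
          Finset.sum_le_sum h2
      _ ≤ S :=
          Finset.sum_le_sum_of_subset_of_nonneg (Finset.subset_univ _)
            (by intro ℓ _ _; positivity)
  have hcards : (A.card : ℝ) + ((Finset.univ \ A).card : ℝ)
      = (Fintype.card (Fin m → Fin n) : ℝ) := by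
    have hh : A.card + (Finset.univ \ A).card = Fintype.card (Fin m → Fin n) := by
      rw [Finset.card_sdiff_of_subset (Finset.subset_univ A), Finset.card_univ]
      have := Finset.card_le_univ A
      omega
    exact_mod_cast hh
  set μ := min (c1 * n * m / 2) (c2 * n * m) with hμdef
  have hmin : min ((⌊c1 * (n : ℝ) * m / 8⌋ : ℝ)) (c2 * n * m) ≤ μ := by
    refine min_le_min ?_ le_rfl
    calc ((⌊c1 * (n : ℝ) * m / 8⌋ : ℝ)) ≤ c1 * n * m / 8 := Int.floor_le _
      _ ≤ c1 * n * m / 2 := by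
          have : (0 : ℝ) ≤ c1 * n * m := by positivity
          linarith
  have hμ1 : μ * A.card ≤ S := by
    have hAnn : (0 : ℝ) ≤ (A.card : ℝ) := by positivity
    have e1 : ((n : ℝ) + 1) * ((A.card : ℝ) * (c1 * m)) ≤
        ((n : ℝ) + 1) * ∑ ℓ : Fin m → Fin n, (Z ℓ : ℝ) := by
      apply mul_le_mul_of_nonneg_left h1
      positivity
    have e2 : (c1 * n * m / 2) * A.card ≤ S := by
      nlinarith [mul_nonneg hAnn (mul_nonneg hc1.le hmn)]
    calc μ * A.card ≤ (c1 * n * m / 2) * A.card :=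
          mul_le_mul_of_nonneg_right (min_le_left _ _) hAnn
      _ ≤ S := e2
  have hμ2 : μ * ((Finset.univ \ A).card : ℝ) ≤ S := by
    have hBnn : (0 : ℝ) ≤ ((Finset.univ \ A).card : ℝ) := by positivity
    calc μ * ((Finset.univ \ A).card : ℝ) ≤ (c2 * n * m) * ((Finset.univ \ A).card : ℝ) :=
          mul_le_mul_of_nonneg_right (min_le_right _ _) hBnn
      _ ≤ S := by rw [mul_comm]; exact h3
  rw [le_div_iff₀ hK]
  have hfin : min ((⌊c1 * (n : ℝ) * m / 8⌋ : ℝ)) (c2 * n * m) *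
      (Fintype.card (Fin m → Fin n) : ℝ) ≤ 2 * S := by
    calc min ((⌊c1 * (n : ℝ) * m / 8⌋ : ℝ)) (c2 * n * m) *
        (Fintype.card (Fin m → Fin n) : ℝ)
        ≤ μ * (Fintype.card (Fin m → Fin n) : ℝ) :=
          mul_le_mul_of_nonneg_right hmin hK.le
      _ = μ * (A.card : ℝ) + μ * ((Finset.univ \ A).card : ℝ) := by
          rw [← hcards]; ring
      _ ≤ S + S := add_le_add hμ1 hμ2
      _ = 2 * S := by ring
  linarith
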